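/- Strong Lyapunov property with partial shift: Let f be differentiable, μ-strongly convex with minimizer x⋆, 0 ≤ μ̂ < μ, δ = μ − μ̂, β > 0. Define f_{−μ̂}(x) = f(x) − (μ̂/2)‖x−x⋆‖², E(x,y) = D_{f_{−μ̂}}(x, x⋆) + (μ/2)‖y − x⋆‖², and G(x,y) = (y − x − β∇f(x), x − y − (1/μ)∇f(x)). Then −⟨∇E(x,y), G(x,y)⟩ ≥ (2 − √(δ/μ)) E(x,y) + (1 − √(δ/μ)) Δ_f(x, x⋆) + β‖∇f_{−μ̂}(x)‖² + βμ̂⟨∇f_{−μ̂}(x), x − x⋆⟩, where Δ_f(x, x⋆) = D_f(x⋆, x) − D_f(x, x⋆). -/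

import Mathlib

open RealInnerProductSpace

theorem strong_lyapunov_partial_shift {E : Type*} [NormedAddCommGroup E]
    [InnerProductSpace ℝ E] [CompleteSpace E] (f : E → ℝ) (f' : E → E) (μ μh β : ℝ)
    (hμ : 0 < μ) (hμh : 0 ≤ μh) (hlt : μh < μ) (hβ : 0 < β)
    (hf : ∀ x, HasGradientAt f (f' x) x)
    (hsc : ∀ x y, f x - f y - ⟪f' y, x - y⟫ ≥ μ / 2 * ‖x - y‖ ^ 2)
    (xs : E) (hcrit : f' xs = 0) (x y : E) :
    -(⟪f' x - μh • (x - xs), y - x - β • f' x⟫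
        + ⟪μ • (y - xs), x - y - (1 / μ) • f' x⟫)
      ≥ (2 - Real.sqrt ((μ - μh) / μ)) *
          (((f x - μh / 2 * ‖x - xs‖ ^ 2) - (f xs - μh / 2 * ‖xs - xs‖ ^ 2)
              - ⟪f' xs - μh • (xs - xs), x - xs⟫) + μ / 2 * ‖y - xs‖ ^ 2)
        + (1 - Real.sqrt ((μ - μh) / μ)) *
          ((f xs - f x - ⟪f' x, xs - x⟫) - (f x - f xs - ⟪f' xs, x - xs⟫))
        + β * ‖f' x - μh • (x - xs)‖ ^ 2
        + β * μh * ⟪f' x - μh • (x - xs), x - xs⟫ := by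
  have hs0 : (0:ℝ) ≤ (μ - μh) / μ := div_nonneg (by linarith) hμ.le
  set s := Real.sqrt ((μ - μh) / μ) with hsdef
  have hs : 0 ≤ s := Real.sqrt_nonneg _
  have hs2 : μ * s ^ 2 = μ - μh := by
    rw [hsdef, Real.sq_sqrt hs0]
    field_simp
  set g := f' x with hg
  set v := x - xs with hv
  set w := y - xs with hw
  have hyx : y - x = w - v := by rw [hv, hw]; abel
  have hxy : x - y = v - w := by rw [hv, hw]; abel
  have hsx : xs - x = -v := by rw [hv]; abel
  have h1 := hsc xs x
  rw [hsx, norm_neg, inner_neg_right] at h1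
  -- h1 : f xs - f x - -⟪g, v⟫ ≥ μ / 2 * ‖v‖ ^ 2
  have hcs : ⟪v, w⟫ ≤ ‖v‖ * ‖w‖ := real_inner_le_norm v w
  have ham : 0 ≤ μ * s * (s * ‖v‖ - ‖w‖) ^ 2 :=
    mul_nonneg (mul_nonneg hμ.le hs) (sq_nonneg _)
  have hnv : ⟪v, v⟫ = ‖v‖ ^ 2 := real_inner_self_eq_norm_sq v
  have hnw : ⟪w, w⟫ = ‖w‖ ^ 2 := real_inner_self_eq_norm_sq w
  have hng : ‖g - μh • v‖ ^ 2 = ⟪g, g⟫ - 2 * μh * ⟪g, v⟫ + μh ^ 2 * ⟪v, v⟫ := by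
    rw [← real_inner_self_eq_norm_sq]
    simp only [inner_sub_left, inner_sub_right, real_inner_smul_left, real_inner_smul_right,
      real_inner_comm v g]
    ring
  rw [hyx, hxy, hsx, hcrit, hng]
  simp only [sub_self, norm_zero, inner_zero_left, zero_smul, inner_sub_left,
    inner_sub_right, real_inner_smul_left, real_inner_smul_right, inner_neg_right]
  rw [← real_inner_comm v g, ← real_inner_comm w v, ← real_inner_comm w g, hnv, hnw]
  have hinv : 1 / μ * (μ * ⟪g, w⟫) = ⟪g, w⟫ := by field_simp
  rw [hinv, ← hg] at *
  have key : s * (μ - μh) * ‖v‖ ^ 2 + s * μ * ‖w‖ ^ 2 - 2 * (μ - μh) * (‖v‖ * ‖w‖)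
      = μ * s * (s * ‖v‖ - ‖w‖) ^ 2 := by
    have h := hs2.symm
    rw [h]; ring
  have ham2 : 2 * (μ - μh) * (‖v‖ * ‖w‖) ≤ s * (μ - μh) * ‖v‖ ^ 2 + s * μ * ‖w‖ ^ 2 := by
    linarith [ham]
  nlinarith [mul_le_mul_of_nonneg_left hcs (by linarith : (0:ℝ) ≤ μ - μh),
    mul_le_mul_of_nonneg_left h1 hs, ham2]
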